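/- Let R be a ring and let A, B, R₀, S give a lag-ℓ shift equivalence between square matrices A and B over R. Then the PSE (polynomial shift equivalence) equation holds over R[t]: [[1, 0],[t^ℓ S, 1]] · [[1, -R₀],[0, 1]] · [[1-tA, 0],[0, 1]] · [[1 + tA + ⋯ + (tA)^(ℓ-1), R₀],[-t^ℓ S, 1-tB]] = [[1, 0],[0, 1-tB]]. -/
import Mathlib
open Polynomial Matrix
private lemma mul_Xpow_smul {R : Type*} [Ring R] {a b c : Type*} [Fintype b]
    (k : ℕ) (M : Matrix a b (Polynomial R)) (N : Matrix b c (Polynomial R)) :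
    M * ((X : Polynomial R) ^ k • N) = (X : Polynomial R) ^ k • (M * N) := by
  refine Matrix.ext fun i j => ?_
  simp only [Matrix.mul_apply, Matrix.smul_apply, smul_eq_mul]
  rw [Polynomial.X_pow_mul, Finset.sum_mul]
  refine Finset.sum_congr rfl fun x _ => ?_
  rw [Polynomial.X_pow_mul, ← mul_assoc]

private lemma Xpow_smul_mul {R : Type*} [Ring R] {a b c : Type*} [Fintype b]
    (k : ℕ) (M : Matrix a b (Polynomial R)) (N : Matrix b c (Polynomial R)) :
    ((X : Polynomial R) ^ k • M) * N = (X : Polynomial R) ^ k • (M * N) := by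
  refine Matrix.ext fun i j => ?_
  simp only [Matrix.mul_apply, Matrix.smul_apply, smul_eq_mul]
  rw [Polynomial.X_pow_mul, Finset.sum_mul]
  refine Finset.sum_congr rfl fun x _ => ?_
  rw [Polynomial.X_pow_mul, mul_assoc, Polynomial.X_pow_mul, ← mul_assoc]

private lemma tA_pow {R : Type*} [Ring R] {n : ℕ} (A : Matrix (Fin n) (Fin n) R) (k : ℕ) :
    ((X : Polynomial R) • A.map Polynomial.C) ^ k
      = (X : Polynomial R) ^ k • (A ^ k).map Polynomial.C := by
  induction k with
  | zero => simp
  | succ k ih =>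
    have e1 : (X : Polynomial R) • A.map Polynomial.C
        = (X : Polynomial R) ^ 1 • A.map Polynomial.C := by simp
    rw [pow_succ, ih, e1, mul_Xpow_smul, Xpow_smul_mul, smul_smul, ← pow_add,
      ← Matrix.map_mul, ← pow_succ, add_comm 1 k]

/-- the PSE (polynomial shift equivalence) equation over `R[t]`
derived from a lag-ℓ shift equivalence over the ring `R`. -/
theorem pse_equation (R : Type*) [Ring R] (n m ℓ : ℕ) (hℓ : 0 < ℓ)
    (A : Matrix (Fin n) (Fin n) R) (B : Matrix (Fin m) (Fin m) R)
    (R₀ : Matrix (Fin n) (Fin m) R) (S : Matrix (Fin m) (Fin n) R)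
    (h1 : A ^ ℓ = R₀ * S) (h2 : B ^ ℓ = S * R₀)
    (h3 : A * R₀ = R₀ * B) (h4 : S * A = B * S) :
    let tA : Matrix (Fin n) (Fin n) (Polynomial R) :=
      (X : Polynomial R) • A.map Polynomial.C
    let tB : Matrix (Fin m) (Fin m) (Polynomial R) :=
      (X : Polynomial R) • B.map Polynomial.C
    let R₀' : Matrix (Fin n) (Fin m) (Polynomial R) := R₀.map Polynomial.C
    let S' : Matrix (Fin m) (Fin n) (Polynomial R) := S.map Polynomial.C
    Matrix.fromBlocks 1 0 ((X : Polynomial R) ^ ℓ • S') 1 *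
      Matrix.fromBlocks 1 (-R₀') 0 1 *
      Matrix.fromBlocks (1 - tA) 0 0 1 *
      Matrix.fromBlocks (∑ i ∈ Finset.range ℓ, tA ^ i) R₀'
        (-((X : Polynomial R) ^ ℓ • S')) (1 - tB) =
    Matrix.fromBlocks 1 0 0 (1 - tB) := by
  intro tA tB R₀' S'
  have e1 : tA = (X : Polynomial R) ^ 1 • A.map Polynomial.C := by simp [tA]
  have e2 : tB = (X : Polynomial R) ^ 1 • B.map Polynomial.C := by simp [tB]
  have htAR : tA * R₀' = R₀' * tB := by
    rw [e1, e2, Xpow_smul_mul, mul_Xpow_smul, ← Matrix.map_mul, ← Matrix.map_mul, h3]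
  have hgeom : (1 - tA) * (∑ i ∈ Finset.range ℓ, tA ^ i)
      = 1 - (X : Polynomial R) ^ ℓ • (R₀ * S).map Polynomial.C := by
    have h := congrArg Neg.neg (mul_geom_sum tA ℓ)
    rw [← neg_mul, neg_sub, neg_sub] at h
    rw [h, tA_pow, h1]
  have hgeom' : tA * (∑ i ∈ Finset.range ℓ, tA ^ i)
      = (∑ i ∈ Finset.range ℓ, tA ^ i)
        - (1 - (X : Polynomial R) ^ ℓ • (R₀ * S).map Polynomial.C) := by
    rw [← hgeom, Matrix.sub_mul, Matrix.one_mul, sub_sub_cancel]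
  have hRS : R₀' * ((X : Polynomial R) ^ ℓ • S')
      = (X : Polynomial R) ^ ℓ • (R₀ * S).map Polynomial.C := by
    rw [mul_Xpow_smul, ← Matrix.map_mul]
  rw [Matrix.fromBlocks_multiply, Matrix.fromBlocks_multiply, Matrix.fromBlocks_multiply]
  simp only [Matrix.one_mul, Matrix.mul_one, Matrix.zero_mul, Matrix.mul_zero,
    add_zero, zero_add, Matrix.neg_mul, Matrix.mul_neg, neg_neg]
  rw [Matrix.fromBlocks_inj]
  refine ⟨?_, ?_, ?_, ?_⟩
  · rw [hgeom, hRS]; abel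
  · rw [Matrix.sub_mul, Matrix.mul_sub, Matrix.one_mul, Matrix.mul_one, htAR]; abel
  · simp only [Matrix.mul_sub, Matrix.sub_mul, Matrix.add_mul, Matrix.mul_add,
      Matrix.one_mul, Matrix.mul_one, Matrix.neg_mul, Matrix.mul_neg,
      Xpow_smul_mul, mul_Xpow_smul, smul_smul, ← pow_add, smul_sub, smul_add,
      Matrix.mul_assoc, hgeom', Matrix.map_mul]
    abel
  · simp only [Matrix.mul_sub, Matrix.sub_mul, Matrix.add_mul, Matrix.mul_add,
      Matrix.one_mul, Matrix.mul_one, Matrix.neg_mul, Matrix.mul_neg,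
      Xpow_smul_mul, mul_Xpow_smul, smul_smul, ← pow_add, smul_sub, smul_add,
      Matrix.mul_assoc, htAR]
    abel
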